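/- Let (A_i, B_i) for i = 1,…,m be finite sets with A_i ∩ B_i = ∅ for all i and A_i ∩ B_j ≠ ∅ for all i ≠ j (a cross intersecting set pair system). Then ∑_{i=1}^m 1 / C(|A_i| + |B_i|, |A_i|) ≤ 1. -/

import Mathlib

lemma arith_key (a b N : ℕ) (hb : 1 ≤ b) (hab : a + b ≤ N) :
    (b : ℚ) * (1 / ((a + (b - 1)).choose a)) +
      ((N - a - b : ℕ) : ℚ) * (1 / ((a + b).choose a)) =
      (N : ℚ) * (1 / ((a + b).choose a)) := by
  obtain ⟨b', rfl⟩ := Nat.exists_eq_add_of_le hb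
  have h1 : a + (1 + b' - 1) = a + b' := by omega
  have hid : (a + b' + 1) * ((a + b').choose a) = ((a + (1 + b')).choose a) * (1 + b') := by
    have h := Nat.add_one_mul_choose_eq (a + b') b'
    have hsymm : (a + b').choose a = (a + b').choose b' := by
      rw [← Nat.choose_symm (by omega : b' ≤ a + b')]
      congr 1; omega
    have hsymm2 : (a + b' + 1).choose (b' + 1) = (a + b' + 1).choose a := by
      rw [← Nat.choose_symm (by omega : b' + 1 ≤ a + b' + 1)]
      congr 1; omega
    have h2 : a + (1 + b') = (a + b') + 1 := by omega
    rw [hsymm, h2]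
    rw [hsymm2] at h
    simpa [Nat.succ_eq_add_one, mul_comm, Nat.add_comm 1 b'] using h
  have hc1 : 0 < ((a + b').choose a) := Nat.choose_pos (by omega)
  have hc2 : 0 < ((a + (1 + b')).choose a) := Nat.choose_pos (by omega)
  have hsub : ((N - a - (1 + b') : ℕ) : ℚ) = (N : ℚ) - a - (1 + b') := by
    have : (N - a - (1 + b')) + (a + (1 + b')) = N := by omega
    have := congrArg (fun t : ℕ => (t : ℚ)) this
    push_cast at this
    linarith
  rw [h1, hsub]
  have hidQ : ((a : ℚ) + b' + 1) * ((a + b').choose a : ℚ) =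
      (((a + (1 + b')).choose a : ℕ) : ℚ) * (1 + b') := by exact_mod_cast hid
  have hne1 : (((a + b').choose a : ℕ) : ℚ) ≠ 0 := by positivity
  have hne2 : (((a + (1 + b')).choose a : ℕ) : ℚ) ≠ 0 := by positivity
  field_simp
  ring_nf
  ring_nf at hidQ
  rw [show 1 + b' + a = 1 + a + b' by omega, show b' + a = a + b' by omega] at *
  push_cast at *
  nlinarith [hidQ]

lemma term_le_one (a b : ℕ) : (1 : ℚ) / ((a + b).choose a) ≤ 1 := by
  have h : 0 < (a + b).choose a := Nat.choose_pos (by omega)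
  rw [div_le_one (by exact_mod_cast h)]
  exact_mod_cast h

lemma bollobas_aux {α : Type*} [DecidableEq α] :
    ∀ (n : ℕ) (X : Finset α), X.card = n → ∀ {ι : Type} [Fintype ι]
      (A B : ι → Finset α), (∀ i, A i ⊆ X) → (∀ i, B i ⊆ X) →
      (∀ i, A i ∩ B i = ∅) → (∀ i j, i ≠ j → (A i ∩ B j).Nonempty) →
      ∑ i, (1 : ℚ) / (((A i).card + (B i).card).choose (A i).card) ≤ 1 := by
  intro n
  induction n with
  | zero =>
    intro X hX ι _ A B hA hB hdisj hcross
    rcases Finset.card_eq_zero.mp hX with rfl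
    by_cases h1 : Fintype.card ι ≤ 1
    · calc ∑ i, (1 : ℚ) / (((A i).card + (B i).card).choose (A i).card)
          ≤ ∑ _i : ι, (1 : ℚ) := Finset.sum_le_sum (fun i _ => term_le_one _ _)
        _ = Fintype.card ι := by simp
        _ ≤ 1 := by exact_mod_cast h1
    · obtain ⟨i, j, hij⟩ := Fintype.exists_pair_of_one_lt_card (show 1 < Fintype.card ι by omega)
      obtain ⟨y, hy⟩ := hcross i j hij
      have := hA i (Finset.mem_inter.mp hy).1
      simp at this
  | succ n ih =>
    intro X hX ι _ A B hA hB hdisj hcross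
    by_cases h1 : Fintype.card ι ≤ 1
    · calc ∑ i, (1 : ℚ) / (((A i).card + (B i).card).choose (A i).card)
          ≤ ∑ _i : ι, (1 : ℚ) := Finset.sum_le_sum (fun i _ => term_le_one _ _)
        _ = Fintype.card ι := by simp
        _ ≤ 1 := by exact_mod_cast h1
    have hBne : ∀ i, (B i).Nonempty := by
      intro i
      obtain ⟨j, hj⟩ := Fintype.exists_ne_of_one_lt_card (by omega) i
      exact ((hcross j i hj).mono Finset.inter_subset_right)
    -- per-x bound via induction hypothesis
    have key : ∀ x ∈ X,
        (∑ i ∈ Finset.univ.filter (fun i => x ∉ A i),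
          (1 : ℚ) / (((A i).card + ((B i).erase x).card).choose (A i).card)) ≤ 1 := by
      intro x hx
      have hcard : (X.erase x).card = n := by
        rw [Finset.card_erase_of_mem hx, hX]; omega
      have := ih (X.erase x) hcard (ι := {i : ι // x ∉ A i})
        (fun i => A i.1) (fun i => (B i.1).erase x)
        (fun i => Finset.subset_erase.mpr ⟨hA i.1, i.2⟩)
        (fun i => Finset.erase_subset_erase x (hB i.1))
        (fun i => by
          apply Finset.eq_empty_of_forall_notMem
          intro y hy
          have h0 := hdisj i.1
          have : y ∈ A i.1 ∩ B i.1 := by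
            simp only [Finset.mem_inter, Finset.mem_erase] at hy ⊢
            exact ⟨hy.1, hy.2.2⟩
          rw [h0] at this
          simp at this)
        (fun i j hij => by
          obtain ⟨y, hy⟩ := hcross i.1 j.1 (fun h => hij (Subtype.ext h))
          simp only [Finset.mem_inter] at hy
          refine ⟨y, ?_⟩
          simp only [Finset.mem_inter, Finset.mem_erase]
          exact ⟨hy.1, fun h => i.2 (by subst h; exact hy.1), hy.2⟩)
      rw [← Finset.sum_subtype (Finset.univ.filter (fun i => x ∉ A i))
        (fun i => by simp) (fun i => (1 : ℚ) / (((A i).card + ((B i).erase x).card).choose (A i).card))] at this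
      exact this
    -- double counting
    have swap : ∑ x ∈ X, (∑ i ∈ Finset.univ.filter (fun i => x ∉ A i),
          (1 : ℚ) / (((A i).card + ((B i).erase x).card).choose (A i).card))
        = ((n + 1 : ℕ) : ℚ) * ∑ i, (1 : ℚ) / (((A i).card + (B i).card).choose (A i).card) := by
      have e1 : ∀ x ∈ X, (∑ i ∈ Finset.univ.filter (fun i => x ∉ A i),
            (1 : ℚ) / (((A i).card + ((B i).erase x).card).choose (A i).card))
          = ∑ i : ι, if x ∉ A i then
            (1 : ℚ) / (((A i).card + ((B i).erase x).card).choose (A i).card) else 0 := by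
        intro x _
        rw [Finset.sum_filter]
      rw [Finset.sum_congr rfl e1, Finset.sum_comm]
      rw [Finset.mul_sum]
      refine Finset.sum_congr rfl ?_
      intro i _
      have e2 : (∑ x ∈ X, if x ∉ A i then
            (1 : ℚ) / (((A i).card + ((B i).erase x).card).choose (A i).card) else 0)
          = ∑ x ∈ X \ A i, (1 : ℚ) / (((A i).card + ((B i).erase x).card).choose (A i).card) := by
        rw [Finset.sdiff_eq_filter, Finset.sum_filter]
      rw [e2]
      have hBsub : B i ⊆ X \ A i := by
        intro y hy
        rw [Finset.mem_sdiff]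
        refine ⟨hB i hy, fun hq => ?_⟩
        have : y ∈ A i ∩ B i := Finset.mem_inter.mpr ⟨hq, hy⟩
        rw [hdisj i] at this; simp at this
      rw [← Finset.sum_sdiff hBsub]
      have hd : Disjoint (A i) (B i) := Finset.disjoint_iff_inter_eq_empty.mpr (hdisj i)
      have hab : (A i).card + (B i).card ≤ n + 1 := by
        rw [← Finset.card_union_of_disjoint hd, ← hX]
        exact Finset.card_le_card (Finset.union_subset (hA i) (hB i))
      have s1 : (∑ x ∈ B i, (1 : ℚ) / (((A i).card + ((B i).erase x).card).choose (A i).card))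
          = ((B i).card : ℚ) * (1 / (((A i).card + ((B i).card - 1)).choose (A i).card)) := by
        rw [Finset.sum_congr rfl (fun x hx => by rw [Finset.card_erase_of_mem hx])]
        rw [Finset.sum_const, nsmul_eq_mul]
      have s2 : (∑ x ∈ (X \ A i) \ B i,
            (1 : ℚ) / (((A i).card + ((B i).erase x).card).choose (A i).card))
          = ((n + 1 - (A i).card - (B i).card : ℕ) : ℚ)
            * (1 / (((A i).card + (B i).card).choose (A i).card)) := by
        have e3 : ∀ x ∈ (X \ A i) \ B i,
            (1 : ℚ) / (((A i).card + ((B i).erase x).card).choose (A i).card)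
            = (1 : ℚ) / (((A i).card + (B i).card).choose (A i).card) := by
          intro x hx
          rw [Finset.erase_eq_of_notMem (Finset.mem_sdiff.mp hx).2]
        rw [Finset.sum_congr rfl e3, Finset.sum_const, nsmul_eq_mul]
        congr 2
        rw [Finset.card_sdiff_of_subset hBsub, Finset.card_sdiff_of_subset (hA i), hX]
      rw [s1, s2]
      have := arith_key (A i).card (B i).card (n + 1)
        (Nat.one_le_iff_ne_zero.mpr (Finset.card_ne_zero_of_mem (hBne i).choose_spec)) hab
      linarith [this]
    -- conclude
    have total : ((n + 1 : ℕ) : ℚ) * ∑ i, (1 : ℚ) / (((A i).card + (B i).card).choose (A i).card)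
        ≤ ((n + 1 : ℕ) : ℚ) := by
      rw [← swap]
      calc (∑ x ∈ X, (∑ i ∈ Finset.univ.filter (fun i => x ∉ A i),
            (1 : ℚ) / (((A i).card + ((B i).erase x).card).choose (A i).card)))
          ≤ ∑ _x ∈ X, (1 : ℚ) := Finset.sum_le_sum key
        _ = X.card := by simp
        _ = ((n + 1 : ℕ) : ℚ) := by rw [hX]
    have hpos : (0 : ℚ) < ((n + 1 : ℕ) : ℚ) := by positivity
    nlinarith [total]

theorem stmt_6 {α : Type*} [DecidableEq α] (m : ℕ) (A B : Fin m → Finset α)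
    (hdisj : ∀ i, A i ∩ B i = ∅)
    (hcross : ∀ i j, i ≠ j → (A i ∩ B j).Nonempty) :
    ∑ i, (1 : ℚ) / (((A i).card + (B i).card).choose (A i).card) ≤ 1 := by
  set X : Finset α := Finset.univ.biUnion (fun i => A i ∪ B i) with hXdef
  exact bollobas_aux X.card X rfl A B
    (fun i => fun y hy => Finset.mem_biUnion.mpr ⟨i, Finset.mem_univ i,
      Finset.mem_union_left _ hy⟩)
    (fun i => fun y hy => Finset.mem_biUnion.mpr ⟨i, Finset.mem_univ i,
      Finset.mem_union_right _ hy⟩)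
    hdisj hcross
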